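/- arXiv:2306.09856 — 9 statements merged into one kernel-verified Lean document; each statement's English description precedes it below -/
import Mathlib

section
/- For any real polynomial P of degree at most 3 and any h > 0, the average of P over [x - h/2, x + h/2] equals (1/24) · (13·(P(x - h/2) + P(x + h/2)) - (P(x - 3h/2) + P(x + 3h/2))). -/
theorem stmt_1 (P : Polynomial ℝ) (hP : P.degree ≤ 3) (x h : ℝ) (hh : 0 < h) :
    (1 / h) * ∫ t in (x - h / 2)..(x + h / 2), P.eval t =
      (1 / 24) * (13 * (P.eval (x - h / 2) + P.eval (x + h / 2))
        - (P.eval (x - 3 * h / 2) + P.eval (x + 3 * h / 2))) := by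
  set c0 := P.coeff 0
  set c1 := P.coeff 1
  set c2 := P.coeff 2
  set c3 := P.coeff 3
  have hnat : P.natDegree < 4 := by
    have : P.natDegree ≤ 3 := Polynomial.natDegree_le_iff_degree_le.mpr (by exact_mod_cast hP)
    omega
  have heval : ∀ t : ℝ, P.eval t = c0 + c1 * t + c2 * t ^ 2 + c3 * t ^ 3 := by
    intro t
    rw [Polynomial.eval_eq_sum_range' hnat]
    simp [Finset.sum_range_succ]
    try ring
  set F : ℝ → ℝ := fun t => c0 * t + c1 / 2 * t ^ 2 + c2 / 3 * t ^ 3 + c3 / 4 * t ^ 4 with hF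
  have hderiv : ∀ t ∈ Set.uIcc (x - h / 2) (x + h / 2),
      HasDerivAt F (P.eval t) t := by
    intro t _
    have := ((hasDerivAt_id t).const_mul c0).add
      ((((hasDerivAt_pow 2 t).const_mul (c1 / 2)).add
        ((hasDerivAt_pow 3 t).const_mul (c2 / 3))).add
        ((hasDerivAt_pow 4 t).const_mul (c3 / 4)))
    convert this using 1
    · rfl
    · rfl
    · ext u; simp [hF]; ring
    · rw [heval]; push_cast; ring
  have hint : ∫ t in (x - h / 2)..(x + h / 2), P.eval t
      = F (x + h / 2) - F (x - h / 2) :=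
    intervalIntegral.integral_eq_sub_of_hasDerivAt hderiv
      ((Polynomial.continuous P).intervalIntegrable _ _)
  rw [hint, heval, heval, heval, heval, hF]
  field_simp
  ring
end

section
/- For any real polynomial P of degree at most 5 and any h > 0, the average of P over [x - h/2, x + h/2] equals (1/1440) · (802·(P(x - h/2) + P(x + h/2)) - 93·(P(x - 3h/2) + P(x + 3h/2)) + 11·(P(x - 5h/2) + P(x + 5h/2))). -/
set_option maxHeartbeats 2000000


theorem stmt_2 (P : Polynomial ℝ) (hP : P.degree ≤ 5) (x h : ℝ) (hh : 0 < h) :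
    (1 / h) * ∫ t in (x - h / 2)..(x + h / 2), P.eval t =
      (1 / 1440) * (802 * (P.eval (x - h / 2) + P.eval (x + h / 2))
        - 93 * (P.eval (x - 3 * h / 2) + P.eval (x + 3 * h / 2))
        + 11 * (P.eval (x - 5 * h / 2) + P.eval (x + 5 * h / 2))) := by
  have hd : P.natDegree < 6 := by
    have h5 : P.natDegree ≤ 5 := Polynomial.natDegree_le_iff_degree_le.mpr (by exact_mod_cast hP)
    omega
  have heval : ∀ y : ℝ, P.eval y = ∑ i ∈ Finset.range 6, P.coeff i * y ^ i := fun y =>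
    Polynomial.eval_eq_sum_range' hd y
  have hint : (∫ t in (x - h / 2)..(x + h / 2), P.eval t)
      = ∑ i ∈ Finset.range 6, P.coeff i *
        (((x + h / 2) ^ (i + 1) - (x - h / 2) ^ (i + 1)) / (i + 1)) := by
    rw [intervalIntegral.integral_congr (g := fun t => ∑ i ∈ Finset.range 6, P.coeff i * t ^ i)
      (fun t _ => heval t)]
    rw [intervalIntegral.integral_finset_sum]
    · refine Finset.sum_congr rfl fun i _ => ?_
      rw [intervalIntegral.integral_const_mul, integral_pow]
    · intro i _
      exact (intervalIntegral.intervalIntegrable_pow i).const_mul _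
  rw [hint]
  simp only [heval, Finset.sum_range_succ, Finset.sum_range_zero]
  have hne : h ≠ 0 := ne_of_gt hh
  push_cast
  field_simp
  ring
end

section
/- For any real polynomial P of degree at most 3, denoting q̄_i = (1/h)∫_{a + i·h}^{a + (i+1)·h} P(t) dt for integer i, one has P(a + h/2) = (13/12)·q̄_0 - (1/24)·(q̄_1 + q̄_{-1}). -/
theorem stmt_5 (P : Polynomial ℝ) (hP : P.degree ≤ 3) (a h : ℝ) (hh : 0 < h)
    (qbar : ℤ → ℝ)
    (hq : ∀ i : ℤ, qbar i = (1 / h) * ∫ t in (a + i * h)..(a + (i + 1) * h), P.eval t) :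
    P.eval (a + h / 2) = (13 / 12) * qbar 0 - (1 / 24) * (qbar 1 + qbar (-1)) := by
  have hd : P.natDegree < 4 := by
    have h3 : P.natDegree ≤ 3 := Polynomial.natDegree_le_iff_degree_le.mpr hP
    omega
  have heval : ∀ x : ℝ, P.eval x = ∑ i ∈ Finset.range 4, P.coeff i * x ^ i := fun x => by
    rw [Polynomial.eval_eq_sum_range' hd x]
  have hint : ∀ l u : ℝ, (∫ t in l..u, P.eval t) =
      ∑ i ∈ Finset.range 4, P.coeff i * ((u ^ (i + 1) - l ^ (i + 1)) / (i + 1)) := by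
    intro l u
    simp only [heval]
    rw [intervalIntegral.integral_finset_sum]
    · refine Finset.sum_congr rfl fun i _ => ?_
      rw [intervalIntegral.integral_const_mul, integral_pow]
    · intro i _
      exact (intervalIntegral.intervalIntegrable_pow i).const_mul _
  rw [hq 0, hq 1, hq (-1), hint, hint, hint, heval]
  simp only [Finset.sum_range_succ, Finset.sum_range_zero]
  push_cast
  field_simp
  ring
end

section
/- For any real polynomial P of degree at most 5, denoting q̄_i = (1/h)∫_{a + i·h}^{a + (i+1)·h} P(t) dt, one has P(a + h/2) = (1067/960)·q̄_0 - (29/480)·(q̄_1 + q̄_{-1}) + (3/640)·(q̄_2 + q̄_{-2}). -/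
theorem stmt_6 (P : Polynomial ℝ) (hP : P.degree ≤ 5) (a h : ℝ) (hh : 0 < h)
    (qbar : ℤ → ℝ)
    (hq : ∀ i : ℤ, qbar i = (1 / h) * ∫ t in (a + i * h)..(a + (i + 1) * h), P.eval t) :
    P.eval (a + h / 2) = (1067 / 960) * qbar 0 - (29 / 480) * (qbar 1 + qbar (-1))
      + (3 / 640) * (qbar 2 + qbar (-2)) := by
  have hnd : P.natDegree < 6 :=
    lt_of_le_of_lt (Polynomial.natDegree_le_iff_degree_le.mpr hP) (by norm_num)
  have heval : ∀ t : ℝ, P.eval t = ∑ k ∈ Finset.range 6, P.coeff k * t ^ k := fun t =>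
    Polynomial.eval_eq_sum_range' hnd t
  have key : ∀ u v : ℝ, (∫ t in u..v, P.eval t)
      = ∑ k ∈ Finset.range 6, P.coeff k * ((v ^ (k + 1) - u ^ (k + 1)) / (k + 1)) := by
    intro u v
    simp_rw [heval]
    rw [intervalIntegral.integral_finset_sum]
    · refine Finset.sum_congr rfl fun k _ => ?_
      rw [intervalIntegral.integral_const_mul, integral_pow]
    · intro k _
      exact (continuous_const.mul (continuous_pow k)).intervalIntegrable _ _
  simp only [hq, key]
  rw [heval]
  simp only [Finset.sum_range_succ, Finset.sum_range_zero]
  push_cast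
  field_simp
  ring
end

section
/- For any real polynomial P of degree at most 5, denoting q_i = P(a + i·h), the average of P over [a - h/2, a + h/2] equals (863/960)·q_0 + (77/1440)·(q_1 + q_{-1}) - (17/5760)·(q_2 + q_{-2}). -/
theorem stmt_8 (P : Polynomial ℝ) (hP : P.degree ≤ 5) (a h : ℝ) (hh : 0 < h)
    (q : ℤ → ℝ) (hq : ∀ i : ℤ, q i = P.eval (a + i * h)) :
    (1 / h) * (∫ t in (a - h / 2)..(a + h / 2), P.eval t) =
      (863 / 960) * q 0 + (77 / 1440) * (q 1 + q (-1)) - (17 / 5760) * (q 2 + q (-2)) := by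
  have hnd : P.natDegree < 6 := by
    have h5 : P.natDegree ≤ 5 := Polynomial.natDegree_le_of_degree_le hP
    omega
  have heval : ∀ x : ℝ, P.eval x = ∑ i ∈ Finset.range 6, P.coeff i * x ^ i := fun x =>
    Polynomial.eval_eq_sum_range' hnd x
  have hint : (∫ t in (a - h / 2)..(a + h / 2), P.eval t) =
      ∑ i ∈ Finset.range 6, P.coeff i *
        (((a + h / 2) ^ (i + 1) - (a - h / 2) ^ (i + 1)) / (i + 1)) := by
    simp_rw [heval]
    rw [intervalIntegral.integral_finset_sum]
    · refine Finset.sum_congr rfl fun i _ => ?_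
      rw [intervalIntegral.integral_const_mul, integral_pow]
    · intro i _
      exact (intervalIntegral.intervalIntegrable_pow i).const_mul _
  rw [hint, hq, hq, hq, hq, hq]
  simp only [heval, Finset.sum_range_succ, Finset.sum_range_zero]
  push_cast
  field_simp
  ring
end

section
/- For any bivariate real polynomial Q of total degree at most 3 and any hx, hy > 0, the cell average (1/(hx·hy))∫_{-hy/2}^{hy/2}∫_{-hx/2}^{hx/2} Q(x, y) dx dy equals (5/6)·Q(0,0) + (1/24)·(Q(hx, 0) + Q(-hx, 0) + Q(0, hy) + Q(0, -hy)). -/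
open intervalIntegral

lemma per_term (hx hy : ℝ) (hhx : hx ≠ 0) (hhy : hy ≠ 0) (a b : ℕ) (hab : a + b ≤ 3) :
    (1 / (hx * hy)) *
      ((∫ x in (-(hx / 2))..(hx / 2), x ^ a) * (∫ y in (-(hy / 2))..(hy / 2), y ^ b))
    = 5 / 6 * ((0:ℝ) ^ a * (0:ℝ) ^ b)
      + 1 / 24 * (hx ^ a * (0:ℝ) ^ b + (-hx) ^ a * (0:ℝ) ^ b
        + (0:ℝ) ^ a * hy ^ b + (0:ℝ) ^ a * (-hy) ^ b) := by
  rw [integral_pow, integral_pow]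
  have ha : a ≤ 3 := by omega
  have hb : b ≤ 3 := by omega
  interval_cases a <;> interval_cases b <;> first
    | omega
    | (norm_num; done)
    | (norm_num; field_simp; done)
    | (norm_num; field_simp; ring)

theorem stmt_10 (Q : MvPolynomial (Fin 2) ℝ) (hQ : Q.totalDegree ≤ 3)
    (hx hy : ℝ) (hhx : 0 < hx) (hhy : 0 < hy) :
    (1 / (hx * hy)) *
      (∫ y in (-(hy / 2))..(hy / 2), ∫ x in (-(hx / 2))..(hx / 2),
        MvPolynomial.eval ![x, y] Q) =
      (5 / 6) * MvPolynomial.eval ![0, 0] Q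
        + (1 / 24) * (MvPolynomial.eval ![hx, 0] Q + MvPolynomial.eval ![-hx, 0] Q
          + MvPolynomial.eval ![0, hy] Q + MvPolynomial.eval ![0, -hy] Q) := by
  have heval : ∀ (xv yv : ℝ), MvPolynomial.eval ![xv, yv] Q
      = ∑ d ∈ Q.support, MvPolynomial.coeff d Q * (xv ^ d 0 * yv ^ d 1) := by
    intro xv yv
    rw [MvPolynomial.eval_eq']
    refine Finset.sum_congr rfl fun d _ => ?_
    rw [Fin.prod_univ_two]
    simp
  have h1 : ∀ yv : ℝ, (∫ x in (-(hx / 2))..(hx / 2), MvPolynomial.eval ![x, yv] Q)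
      = ∑ d ∈ Q.support, (MvPolynomial.coeff d Q * yv ^ d 1)
          * ∫ x in (-(hx / 2))..(hx / 2), x ^ d 0 := by
    intro yv
    have : ∀ x : ℝ, MvPolynomial.eval ![x, yv] Q
        = ∑ d ∈ Q.support, (MvPolynomial.coeff d Q * yv ^ d 1) * x ^ d 0 := by
      intro x
      rw [heval]
      refine Finset.sum_congr rfl fun d _ => by ring
    simp_rw [this]
    rw [intervalIntegral.integral_finset_sum]
    · exact Finset.sum_congr rfl fun d _ => intervalIntegral.integral_const_mul _ _
    · intro d _
      exact (continuous_const.mul (continuous_pow _)).intervalIntegrable _ _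
  have h2 : (∫ y in (-(hy / 2))..(hy / 2), ∫ x in (-(hx / 2))..(hx / 2),
        MvPolynomial.eval ![x, y] Q)
      = ∑ d ∈ Q.support, MvPolynomial.coeff d Q
          * ((∫ x in (-(hx / 2))..(hx / 2), x ^ d 0)
            * (∫ y in (-(hy / 2))..(hy / 2), y ^ d 1)) := by
    simp_rw [h1]
    have : ∀ y : ℝ, ∑ d ∈ Q.support, (MvPolynomial.coeff d Q * y ^ d 1)
          * ∫ x in (-(hx / 2))..(hx / 2), x ^ d 0
        = ∑ d ∈ Q.support, (MvPolynomial.coeff d Q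
            * ∫ x in (-(hx / 2))..(hx / 2), x ^ d 0) * y ^ d 1 := by
      intro y
      exact Finset.sum_congr rfl fun d _ => by ring
    simp_rw [this]
    rw [intervalIntegral.integral_finset_sum]
    · refine Finset.sum_congr rfl fun d _ => ?_
      rw [intervalIntegral.integral_const_mul]
      ring
    · intro d _
      exact (continuous_const.mul (continuous_pow _)).intervalIntegrable _ _
  rw [h2, heval, heval, heval, heval, heval, Finset.mul_sum]
  rw [← Finset.sum_add_distrib, ← Finset.sum_add_distrib, ← Finset.sum_add_distrib,
    Finset.mul_sum, Finset.mul_sum, ← Finset.sum_add_distrib]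
  refine Finset.sum_congr rfl fun d hd => ?_
  have hdeg : d 0 + d 1 ≤ 3 := by
    have h := MvPolynomial.le_totalDegree (p := Q) hd
    have hsum : d.sum (fun _ e => e) = d 0 + d 1 := by
      rw [Finsupp.sum_fintype _ _ (fun _ => rfl), Fin.sum_univ_two]
    omega
  have := per_term hx hy hhx.ne' hhy.ne' (d 0) (d 1) hdeg
  calc (1 / (hx * hy)) * (MvPolynomial.coeff d Q
        * ((∫ x in (-(hx / 2))..(hx / 2), x ^ d 0)
          * (∫ y in (-(hy / 2))..(hy / 2), y ^ d 1)))
      = MvPolynomial.coeff d Q * ((1 / (hx * hy)) *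
        ((∫ x in (-(hx / 2))..(hx / 2), x ^ d 0)
          * (∫ y in (-(hy / 2))..(hy / 2), y ^ d 1))) := by ring
    _ = _ := by rw [this]; ring
end

section
/- For any bivariate real polynomial Q of total degree at most 3 and any hx, hy > 0, denoting Q̄_{ij} the average of Q over the rectangle [i·hx - hx/2, i·hx + hx/2] × [j·hy - hy/2, j·hy + hy/2], one has Q(0,0) = (7/6)·Q̄_{00} - (1/24)·(Q̄_{10} + Q̄_{-1,0} + Q̄_{01} + Q̄_{0,-1}). -/
noncomputable def Jfun (h : ℝ) (i : ℤ) (n : ℕ) : ℝ :=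
  (((i : ℝ) * h + h / 2) ^ (n + 1) - ((i : ℝ) * h - h / 2) ^ (n + 1)) / (n + 1)

set_option maxHeartbeats 2000000 in
lemma key_11 (a b : ℕ) (hab : a + b ≤ 3) (hx hy : ℝ) (hhx : 0 < hx) (hhy : 0 < hy) :
    (0:ℝ) ^ a * 0 ^ b =
      (7 / 6) * ((1 / (hx * hy)) * (Jfun hx 0 a * Jfun hy 0 b)) -
      (1 / 24) * ((1 / (hx * hy)) * (Jfun hx 1 a * Jfun hy 0 b)
        + (1 / (hx * hy)) * (Jfun hx (-1) a * Jfun hy 0 b)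
        + (1 / (hx * hy)) * (Jfun hx 0 a * Jfun hy 1 b)
        + (1 / (hx * hy)) * (Jfun hx 0 a * Jfun hy (-1) b)) := by
  have ha : a ≤ 3 := le_trans (Nat.le_add_right a b) hab
  have hb : b ≤ 3 := le_trans (Nat.le_add_left b a) hab
  have hx0 : hx ≠ 0 := ne_of_gt hhx
  have hy0 : hy ≠ 0 := ne_of_gt hhy
  interval_cases a <;> interval_cases b <;>
    first | omega | (norm_num [Jfun]; try (field_simp; ring))

set_option maxHeartbeats 2000000 in
theorem stmt_11 (Q : MvPolynomial (Fin 2) ℝ) (hQ : Q.totalDegree ≤ 3)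
    (hx hy : ℝ) (hhx : 0 < hx) (hhy : 0 < hy)
    (Qbar : ℤ → ℤ → ℝ)
    (hQbar : ∀ i j : ℤ, Qbar i j = (1 / (hx * hy)) *
      ∫ y in (j * hy - hy / 2)..(j * hy + hy / 2),
        ∫ x in (i * hx - hx / 2)..(i * hx + hx / 2), MvPolynomial.eval ![x, y] Q) :
    MvPolynomial.eval ![0, 0] Q =
      (7 / 6) * Qbar 0 0 - (1 / 24) * (Qbar 1 0 + Qbar (-1) 0 + Qbar 0 1 + Qbar 0 (-1)) := by
  have hev : ∀ x y : ℝ, MvPolynomial.eval ![x, y] Q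
      = ∑ m ∈ Q.support, Q.coeff m * x ^ m 0 * y ^ m 1 := by
    intro x y
    conv_lhs => rw [Q.as_sum]
    rw [map_sum]
    refine Finset.sum_congr rfl fun m _ => ?_
    rw [MvPolynomial.eval_monomial, Finsupp.prod_fintype _ _ (fun i => pow_zero _),
      Fin.prod_univ_two]
    simp [mul_assoc]
  -- inner integral
  have hinner : ∀ (i : ℤ) (y : ℝ),
      (∫ x in ((i:ℝ) * hx - hx / 2)..((i:ℝ) * hx + hx / 2), MvPolynomial.eval ![x, y] Q)
        = ∑ m ∈ Q.support, Q.coeff m * Jfun hx i (m 0) * y ^ m 1 := by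
    intro i y
    have : (fun x : ℝ => MvPolynomial.eval ![x, y] Q)
        = fun x => ∑ m ∈ Q.support, Q.coeff m * x ^ m 0 * y ^ m 1 := funext fun x => hev x y
    rw [intervalIntegral.integral_congr (fun x _ => hev x y),
      intervalIntegral.integral_finset_sum
        (f := fun m (x : ℝ) => Q.coeff m * x ^ m 0 * y ^ m 1) (fun m _ =>
        ((continuous_const.mul (continuous_pow (m 0))).mul
          continuous_const).intervalIntegrable _ _)]
    refine Finset.sum_congr rfl fun m _ => ?_
    rw [show (fun x : ℝ => Q.coeff m * x ^ m 0 * y ^ m 1)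
        = fun x => (Q.coeff m * y ^ m 1) * x ^ m 0 from funext fun x => by ring]
    rw [intervalIntegral.integral_const_mul, integral_pow, Jfun]
    ring
  have houter : ∀ i j : ℤ, Qbar i j
      = ∑ m ∈ Q.support, Q.coeff m * ((1 / (hx * hy)) * (Jfun hx i (m 0) * Jfun hy j (m 1))) := by
    intro i j
    rw [hQbar i j, intervalIntegral.integral_congr (fun y _ => hinner i y),
      intervalIntegral.integral_finset_sum
        (f := fun m (y : ℝ) => Q.coeff m * Jfun hx i (m 0) * y ^ m 1) (fun m _ =>
        ((continuous_const.mul (continuous_pow (m 1))).intervalIntegrable _ _)),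
      Finset.mul_sum]
    refine Finset.sum_congr rfl fun m _ => ?_
    rw [show (fun y : ℝ => Q.coeff m * Jfun hx i (m 0) * y ^ m 1)
        = fun y => (Q.coeff m * Jfun hx i (m 0)) * y ^ m 1 from rfl]
    rw [intervalIntegral.integral_const_mul, integral_pow]
    simp only [Jfun]
    ring
  have h00 : MvPolynomial.eval ![(0:ℝ), 0] Q
      = ∑ m ∈ Q.support, Q.coeff m * ((0:ℝ) ^ m 0 * 0 ^ m 1) := by
    rw [hev 0 0]; exact Finset.sum_congr rfl fun m _ => by ring
  rw [h00, houter, houter, houter, houter, houter,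
    ← Finset.sum_add_distrib, ← Finset.sum_add_distrib, ← Finset.sum_add_distrib,
    Finset.mul_sum, Finset.mul_sum, ← Finset.sum_sub_distrib]
  refine Finset.sum_congr rfl fun m hm => ?_
  have hdeg : m 0 + m 1 ≤ 3 := by
    have h1 := MvPolynomial.le_totalDegree hm
    have h2 : (m.sum fun _ e => e) = m 0 + m 1 := by
      rw [Finsupp.sum_fintype _ _ (fun i => rfl), Fin.sum_univ_two]
    omega
  linear_combination Q.coeff m * key_11 (m 0) (m 1) hdeg hx hy hhx hhy
end

section
/- For any trivariate real polynomial Q of total degree at most 3 and hx, hy, hz > 0, the cell average of Q over [-hx/2, hx/2] × [-hy/2, hy/2] × [-hz/2, hz/2] equals (3/4)·Q(0,0,0) + (1/24)·(Q(hx,0,0) + Q(-hx,0,0) + Q(0,hy,0) + Q(0,-hy,0) + Q(0,0,hz) + Q(0,0,-hz)). -/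
set_option maxHeartbeats 1000000

open intervalIntegral

lemma key (hx hy hz : ℝ) (hhx : hx ≠ 0) (hhy : hy ≠ 0) (hhz : hz ≠ 0)
    (a b c : ℕ) (h : a + b + c ≤ 3) :
    (1 / (hx * hy * hz)) *
      ((((hx/2)^(a+1) - (-(hx/2))^(a+1))/(a+1)) *
       ((((hy/2)^(b+1) - (-(hy/2))^(b+1))/(b+1))) *
       ((((hz/2)^(c+1) - (-(hz/2))^(c+1))/(c+1))))
    = 3/4 * ((0:ℝ)^a * 0^b * 0^c)
      + 1/24 * (hx^a * 0^b * 0^c + (-hx)^a * 0^b * 0^c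
        + 0^a * hy^b * 0^c + 0^a * (-hy)^b * 0^c
        + 0^a * 0^b * hz^c + 0^a * 0^b * (-hz)^c) := by
  have ha : a ≤ 3 := by omega
  have hb : b ≤ 3 := by omega
  have hc : c ≤ 3 := by omega
  interval_cases a <;> interval_cases b <;> interval_cases c <;>
    first
    | (exfalso; omega)
    | (norm_num; done)
    | (norm_num; field_simp; ring)
    | (norm_num; field_simp)



theorem stmt_12 (Q : MvPolynomial (Fin 3) ℝ) (hQ : Q.totalDegree ≤ 3)
    (hx hy hz : ℝ) (hhx : 0 < hx) (hhy : 0 < hy) (hhz : 0 < hz) :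
    (1 / (hx * hy * hz)) *
      (∫ z in (-(hz / 2))..(hz / 2), ∫ y in (-(hy / 2))..(hy / 2),
        ∫ x in (-(hx / 2))..(hx / 2), MvPolynomial.eval ![x, y, z] Q) =
      (3 / 4) * MvPolynomial.eval ![0, 0, 0] Q
        + (1 / 24) * (MvPolynomial.eval ![hx, 0, 0] Q + MvPolynomial.eval ![-hx, 0, 0] Q
          + MvPolynomial.eval ![0, hy, 0] Q + MvPolynomial.eval ![0, -hy, 0] Q
          + MvPolynomial.eval ![0, 0, hz] Q + MvPolynomial.eval ![0, 0, -hz] Q) := by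
  have hrep : ∀ x y z : ℝ, MvPolynomial.eval ![x, y, z] Q
      = ∑ m ∈ Q.support, Q.coeff m * (x ^ m 0 * y ^ m 1 * z ^ m 2) := by
    intro x y z
    rw [MvPolynomial.eval_eq']
    refine Finset.sum_congr rfl fun m _ => ?_
    rw [Fin.prod_univ_three]
    simp
  have L1 : ∀ y z : ℝ, (∫ x in (-(hx/2))..(hx/2), MvPolynomial.eval ![x, y, z] Q)
      = ∑ m ∈ Q.support, Q.coeff m *
          ((∫ x in (-(hx/2))..(hx/2), x ^ m 0) * (y ^ m 1 * z ^ m 2)) := by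
    intro y z
    simp only [hrep]
    rw [intervalIntegral.integral_finset_sum]
    · refine Finset.sum_congr rfl fun m _ => ?_
      simp only [mul_assoc]
      rw [intervalIntegral.integral_const_mul, intervalIntegral.integral_mul_const]
    · intro m _
      exact (by fun_prop : Continuous fun x : ℝ => Q.coeff m * (x ^ m 0 * y ^ m 1 * z ^ m 2)).intervalIntegrable _ _
  have L2 : ∀ z : ℝ, (∫ y in (-(hy/2))..(hy/2), ∫ x in (-(hx/2))..(hx/2),
        MvPolynomial.eval ![x, y, z] Q)
      = ∑ m ∈ Q.support, Q.coeff m *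
          ((∫ x in (-(hx/2))..(hx/2), x ^ m 0) * (∫ y in (-(hy/2))..(hy/2), y ^ m 1) * z ^ m 2) := by
    intro z
    simp only [L1]
    rw [intervalIntegral.integral_finset_sum]
    · refine Finset.sum_congr rfl fun m _ => ?_
      rw [intervalIntegral.integral_const_mul, intervalIntegral.integral_const_mul,
        intervalIntegral.integral_mul_const]
      ring
    · intro m _
      exact (by fun_prop : Continuous fun y : ℝ =>
        Q.coeff m * ((∫ x in (-(hx/2))..(hx/2), x ^ m 0) * (y ^ m 1 * z ^ m 2))).intervalIntegrable _ _
  have L3 : (∫ z in (-(hz/2))..(hz/2), ∫ y in (-(hy/2))..(hy/2), ∫ x in (-(hx/2))..(hx/2),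
        MvPolynomial.eval ![x, y, z] Q)
      = ∑ m ∈ Q.support, Q.coeff m *
          ((∫ x in (-(hx/2))..(hx/2), x ^ m 0) * (∫ y in (-(hy/2))..(hy/2), y ^ m 1) *
            (∫ z in (-(hz/2))..(hz/2), z ^ m 2)) := by
    simp only [L2]
    rw [intervalIntegral.integral_finset_sum]
    · refine Finset.sum_congr rfl fun m _ => ?_
      rw [intervalIntegral.integral_const_mul, intervalIntegral.integral_const_mul]
    · intro m _
      exact (by fun_prop : Continuous fun z : ℝ =>
        Q.coeff m * ((∫ x in (-(hx/2))..(hx/2), x ^ m 0) * (∫ y in (-(hy/2))..(hy/2), y ^ m 1) * z ^ m 2)).intervalIntegrable _ _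
  have hdeg : ∀ m ∈ Q.support, m 0 + m 1 + m 2 ≤ 3 := by
    intro m hm
    have := MvPolynomial.le_totalDegree hm
    have hsum : m.sum (fun _ n => n) = m 0 + m 1 + m 2 := by
      rw [Finsupp.sum_fintype]
      · rw [Fin.sum_univ_three]
      · intro; rfl
    omega
  rw [L3, hrep, hrep, hrep, hrep, hrep, hrep, hrep, Finset.mul_sum]
  rw [Finset.mul_sum, ← Finset.sum_add_distrib, ← Finset.sum_add_distrib,
    ← Finset.sum_add_distrib, ← Finset.sum_add_distrib, ← Finset.sum_add_distrib,
    Finset.mul_sum, ← Finset.sum_add_distrib]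
  refine Finset.sum_congr rfl fun m hm => ?_
  have hk := key hx hy hz hhx.ne' hhy.ne' hhz.ne' (m 0) (m 1) (m 2) (hdeg m hm)
  simp only [integral_pow]
  push_cast at hk ⊢
  linear_combination Q.coeff m * hk
end

section
/- For any trivariate real polynomial Q of total degree at most 3, denoting V̄_{ijk} the average of Q over the box centered at (i·hx, j·hy, k·hz) with side lengths hx, hy, hz, one has Q(0,0,0) = (5/4)·V̄_{000} - (1/24)·(V̄_{100} + V̄_{-1,0,0} + V̄_{010} + V̄_{0,-1,0} + V̄_{001} + V̄_{0,0,-1}). -/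
noncomputable def Pab (a b : ℝ) (n : ℕ) : ℝ := (b ^ (n + 1) - a ^ (n + 1)) / (n + 1)

lemma intPow1 (C y z A B : ℝ) (n p q : ℕ) :
    (∫ t in A..B, C * (t ^ n * y ^ p * z ^ q)) = C * (Pab A B n * y ^ p * z ^ q) := by
  have h : (∫ t in A..B, C * (t ^ n * y ^ p * z ^ q))
      = ∫ t in A..B, (C * (y ^ p * z ^ q)) * t ^ n := by
    apply intervalIntegral.integral_congr
    intro t _; ring
  rw [h, intervalIntegral.integral_const_mul, integral_pow]
  simp [Pab]; ring

lemma intPow2 (C K z A B : ℝ) (p q : ℕ) :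
    (∫ t in A..B, C * (K * t ^ p * z ^ q)) = C * (K * Pab A B p * z ^ q) := by
  have h : (∫ t in A..B, C * (K * t ^ p * z ^ q))
      = ∫ t in A..B, (C * (K * z ^ q)) * t ^ p := by
    apply intervalIntegral.integral_congr
    intro t _; ring
  rw [h, intervalIntegral.integral_const_mul, integral_pow]
  simp [Pab]; ring

lemma intPow3 (C K L A B : ℝ) (q : ℕ) :
    (∫ t in A..B, C * (K * L * t ^ q)) = C * (K * L * Pab A B q) := by
  have h : (∫ t in A..B, C * (K * L * t ^ q))
      = ∫ t in A..B, (C * (K * L)) * t ^ q := by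
    apply intervalIntegral.integral_congr
    intro t _; ring
  rw [h, intervalIntegral.integral_const_mul, integral_pow]
  simp [Pab]; ring

set_option maxHeartbeats 2000000 in
theorem stmt_13 (Q : MvPolynomial (Fin 3) ℝ) (hQ : Q.totalDegree ≤ 3)
    (hx hy hz : ℝ) (hhx : 0 < hx) (hhy : 0 < hy) (hhz : 0 < hz)
    (Vbar : ℤ → ℤ → ℤ → ℝ)
    (hVbar : ∀ i j k : ℤ, Vbar i j k = (1 / (hx * hy * hz)) *
      ∫ z in (k * hz - hz / 2)..(k * hz + hz / 2),
        ∫ y in (j * hy - hy / 2)..(j * hy + hy / 2),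
          ∫ x in (i * hx - hx / 2)..(i * hx + hx / 2), MvPolynomial.eval ![x, y, z] Q) :
    MvPolynomial.eval ![0, 0, 0] Q =
      (5 / 4) * Vbar 0 0 0 - (1 / 24) * (Vbar 1 0 0 + Vbar (-1) 0 0
        + Vbar 0 1 0 + Vbar 0 (-1) 0 + Vbar 0 0 1 + Vbar 0 0 (-1)) := by
  have heval : ∀ x y z : ℝ, MvPolynomial.eval ![x, y, z] Q
      = ∑ m ∈ Q.support, MvPolynomial.coeff m Q * (x ^ m 0 * y ^ m 1 * z ^ m 2) := by
    intro x y z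
    rw [MvPolynomial.eval_eq']
    refine Finset.sum_congr rfl fun m _ => ?_
    rw [Fin.prod_univ_three]
    simp
  have key : ∀ A B A' B' A'' B'' : ℝ,
      (∫ z in A''..B'', ∫ y in A'..B', ∫ x in A..B, MvPolynomial.eval ![x, y, z] Q)
      = ∑ m ∈ Q.support, MvPolynomial.coeff m Q *
          (Pab A B (m 0) * Pab A' B' (m 1) * Pab A'' B'' (m 2)) := by
    intro A B A' B' A'' B''
    have step1 : ∀ y z : ℝ, (∫ x in A..B, MvPolynomial.eval ![x, y, z] Q)
        = ∑ m ∈ Q.support, MvPolynomial.coeff m Q * (Pab A B (m 0) * y ^ m 1 * z ^ m 2) := by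
      intro y z
      simp_rw [heval]
      rw [intervalIntegral.integral_finset_sum (fun m _ => (Continuous.intervalIntegrable
        (by fun_prop) _ _))]
      exact Finset.sum_congr rfl fun m _ => intPow1 _ _ _ _ _ _ _ _
    simp_rw [step1]
    have step2 : ∀ z : ℝ, (∫ y in A'..B',
        ∑ m ∈ Q.support, MvPolynomial.coeff m Q * (Pab A B (m 0) * y ^ m 1 * z ^ m 2))
        = ∑ m ∈ Q.support, MvPolynomial.coeff m Q *
            (Pab A B (m 0) * Pab A' B' (m 1) * z ^ m 2) := by
      intro z
      rw [intervalIntegral.integral_finset_sum (fun m _ => (Continuous.intervalIntegrable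
        (by fun_prop) _ _))]
      exact Finset.sum_congr rfl fun m _ => intPow2 _ _ _ _ _ _ _
    simp_rw [step2]
    rw [intervalIntegral.integral_finset_sum (fun m _ => (Continuous.intervalIntegrable
      (by fun_prop) _ _))]
    exact Finset.sum_congr rfl fun m _ => intPow3 _ _ _ _ _ _
  simp only [hVbar]
  simp only [key]
  rw [heval]
  simp only [Finset.mul_sum, ← Finset.sum_add_distrib, ← Finset.sum_sub_distrib]
  refine Finset.sum_congr rfl fun m hm => ?_
  have hm3 : m 0 + m 1 + m 2 ≤ 3 := by
    have h1 := (MvPolynomial.le_totalDegree hm).trans hQ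
    have h2 : (m.sum fun _ e => e) = m 0 + m 1 + m 2 := by
      rw [Finsupp.sum_fintype _ _ (fun _ => rfl), Fin.sum_univ_three]
    omega
  have hxne : hx ≠ 0 := ne_of_gt hhx
  have hyne : hy ≠ 0 := ne_of_gt hhy
  have hzne : hz ≠ 0 := ne_of_gt hhz
  have h0 : m 0 = 0 ∨ m 0 = 1 ∨ m 0 = 2 ∨ m 0 = 3 := by omega
  have h1 : m 1 = 0 ∨ m 1 = 1 ∨ m 1 = 2 ∨ m 1 = 3 := by omega
  have h2 : m 2 = 0 ∨ m 2 = 1 ∨ m 2 = 2 ∨ m 2 = 3 := by omega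
  clear heval key hVbar hQ
  rcases h0 with h0 | h0 | h0 | h0 <;> rcases h1 with h1 | h1 | h1 | h1 <;>
    rcases h2 with h2 | h2 | h2 | h2 <;>
    first
      | (exfalso; omega)
      | (rw [h0, h1, h2]; norm_num [Pab]; try field_simp; try ring)
end
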